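/- Let f : R^m → R be twice continuously differentiable and s* ∈ R^m with ‖s*‖₀ ≤ r. Suppose (1) for every i with |{i} ∪ supp(s*)| ≤ r the partial derivative ∂f/∂s_i vanishes at s*, and (2) there is δ > 0 such that the Hessian of f is negative semidefinite at every point s with ‖s‖₀ ≤ r and ‖s - s*‖₂ < δ. Then s* is an r-local maximum point of f, i.e., there exists δ' > 0 such that f(s*) ≥ f(s) for all r-sparse s with ‖s - s*‖₂ < δ'. -/

import Mathlib

open Set

theorem sparse_local_max_of_second_order {m : ℕ} (r : ℕ)
    (f : (Fin m → ℝ) → ℝ) (hf : ContDiff ℝ 2 f)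
    (sstar : Fin m → ℝ) (hs : {j | sstar j ≠ 0}.ncard ≤ r)
    (h1 : ∀ i : Fin m, (insert i {j | sstar j ≠ 0}).ncard ≤ r →
      fderiv ℝ f sstar (Pi.single i 1) = 0)
    (h2 : ∃ δ > (0 : ℝ), ∀ s : Fin m → ℝ, {j | s j ≠ 0}.ncard ≤ r →
      Real.sqrt (∑ j, (s j - sstar j) ^ 2) < δ →
      ∀ v : Fin m → ℝ, iteratedFDeriv ℝ 2 f s ![v, v] ≤ 0) :
    ∃ δ' > (0 : ℝ), ∀ s : Fin m → ℝ, {j | s j ≠ 0}.ncard ≤ r →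
      Real.sqrt (∑ j, (s j - sstar j) ^ 2) < δ' → f s ≤ f sstar := by
  obtain ⟨δ, hδ, hH⟩ := h2
  -- choose ε > 0 below all |sstar j| on support
  obtain ⟨ε, hε, hεle⟩ : ∃ ε > (0:ℝ), ∀ j, sstar j ≠ 0 → ε ≤ |sstar j| := by
    by_cases hne : (Finset.univ.filter (fun j => sstar j ≠ 0)).Nonempty
    · refine ⟨(Finset.univ.filter (fun j => sstar j ≠ 0)).inf' hne (fun j => |sstar j|), ?_, ?_⟩
      · rw [gt_iff_lt, Finset.lt_inf'_iff]
        intro j hj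
        simp only [Finset.mem_filter] at hj
        exact abs_pos.2 hj.2
      · intro j hj
        exact Finset.inf'_le _ (by simp [hj])
    · exact ⟨1, one_pos, fun j hj => absurd (Finset.mem_filter.2 ⟨Finset.mem_univ j, hj⟩)
        (fun h => hne ⟨j, h⟩)⟩
  refine ⟨min δ ε, lt_min hδ hε, fun s hsr hclose => ?_⟩
  set v : Fin m → ℝ := fun j => s j - sstar j with hv
  -- basic norm bound: |v j| < min δ ε for each j
  have hsq : ∀ j, |v j| ≤ Real.sqrt (∑ j, (s j - sstar j) ^ 2) := by
    intro j
    rw [← Real.sqrt_sq_eq_abs]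
    have hle : (s j - sstar j) ^ 2 ≤ ∑ i, (s i - sstar i) ^ 2 :=
      Finset.single_le_sum (f := fun i => (s i - sstar i) ^ 2)
        (fun i _ => sq_nonneg _) (Finset.mem_univ j)
    exact Real.sqrt_le_sqrt hle
  -- support inclusion
  have hsupp : {j | sstar j ≠ 0} ⊆ {j | s j ≠ 0} := by
    intro j hj
    simp only [mem_setOf_eq] at hj ⊢
    intro h0
    have h1' : |v j| < ε := lt_of_le_of_lt (hsq j) (lt_of_lt_of_le hclose (min_le_right _ _))
    have : ε ≤ |sstar j| := hεle j hj
    rw [hv] at h1'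
    simp only [h0, zero_sub, abs_neg] at h1'
    linarith
  have hvsupp : ∀ j, v j ≠ 0 → s j ≠ 0 := by
    intro j hj h0
    apply hj
    have : sstar j = 0 := by
      by_contra h
      exact (hsupp h) h0
    simp [hv, h0, this]
  -- the path
  set x : ℝ → (Fin m → ℝ) := fun t => sstar + t • v with hx
  have hx0 : x 0 = sstar := by simp [hx]
  have hx1 : x 1 = s := by
    funext j
    simp [hx, hv]
  -- segment points are r-sparse and close
  have hxsparse : ∀ t : ℝ, {j | x t j ≠ 0}.ncard ≤ r := by
    intro t
    refine le_trans (Set.ncard_le_ncard ?_ (Set.toFinite _)) hsr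
    intro j hj
    simp only [mem_setOf_eq, hx, Pi.add_apply, Pi.smul_apply, smul_eq_mul] at hj ⊢
    intro h0
    by_cases hsj : sstar j = 0
    · have : v j = 0 := by simp [hv, h0, hsj]
      apply hj; simp [hsj, this]
    · exact (hsupp hsj) h0
  have hxclose : ∀ t ∈ Set.Icc (0:ℝ) 1, Real.sqrt (∑ j, (x t j - sstar j) ^ 2) < δ := by
    intro t ht
    refine lt_of_le_of_lt ?_ (lt_of_lt_of_le hclose (min_le_left _ _))
    apply Real.sqrt_le_sqrt
    apply Finset.sum_le_sum
    intro j _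
    simp only [hx, Pi.add_apply, Pi.smul_apply, smul_eq_mul, add_sub_cancel_left]
    rw [mul_pow]
    calc t ^ 2 * v j ^ 2 ≤ 1 * v j ^ 2 := by
          apply mul_le_mul_of_nonneg_right _ (sq_nonneg _)
          nlinarith [ht.1, ht.2]
      _ = (s j - sstar j) ^ 2 := by rw [one_mul, hv]
  -- derivative of path
  have hxderiv : ∀ t : ℝ, HasDerivAt x v t := by
    intro t
    have : HasDerivAt (fun t : ℝ => t • v) ((1:ℝ) • v) t := (hasDerivAt_id t).smul_const v
    rw [one_smul] at this
    exact this.const_add sstar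
  -- first derivative zero at sstar
  have hD1 : fderiv ℝ f sstar v = 0 := by
    have hveq : v = ∑ i, v i • (Pi.single i 1 : Fin m → ℝ) := by
      funext j
      simp [Finset.sum_apply, Pi.single_apply]
    rw [hveq, map_sum]
    refine Finset.sum_eq_zero fun i _ => ?_
    rw [map_smul]
    by_cases hvi : v i = 0
    · simp [hvi]
    · rw [h1 i ?_, smul_zero]
      refine le_trans (Set.ncard_le_ncard ?_ (Set.toFinite _)) hsr
      exact Set.insert_subset (hvsupp i hvi) hsupp
  -- g and g1
  set g : ℝ → ℝ := fun t => f (x t) with hg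
  set g1 : ℝ → ℝ := fun t => fderiv ℝ f (x t) v with hg1
  have hfd : Differentiable ℝ f := hf.differentiable (by norm_num)
  have hgderiv : ∀ t : ℝ, HasDerivAt g (g1 t) t := by
    intro t
    exact ((hfd (x t)).hasFDerivAt.comp_hasDerivAt t (hxderiv t))
  have hf' : ContDiff ℝ 1 (fderiv ℝ f) := hf.fderiv_right (by norm_num)
  have hg1deriv : ∀ t : ℝ, HasDerivAt g1 (fderiv ℝ (fderiv ℝ f) (x t) v v) t := by
    intro t
    have h1' : HasDerivAt (fun t => fderiv ℝ f (x t)) (fderiv ℝ (fderiv ℝ f) (x t) v) t :=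
      ((hf'.differentiable one_ne_zero) (x t)).hasFDerivAt.comp_hasDerivAt t (hxderiv t)
    exact (ContinuousLinearMap.apply ℝ ℝ v).hasFDerivAt.comp_hasDerivAt t h1'
  -- second derivative nonpos
  have hg1nonpos : ∀ t ∈ Set.Icc (0:ℝ) 1, fderiv ℝ (fderiv ℝ f) (x t) v v ≤ 0 := by
    intro t ht
    have := hH (x t) (hxsparse t) (hxclose t ht) v
    rwa [iteratedFDeriv_two_apply] at this
    -- note ![v,v] 0 = v, ![v,v] 1 = v
  have hg1anti : AntitoneOn g1 (Set.Icc (0:ℝ) 1) := by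
    apply antitoneOn_of_deriv_nonpos (convex_Icc 0 1)
    · exact fun t _ => ((hg1deriv t).continuousAt).continuousWithinAt
    · exact fun t _ => ((hg1deriv t).differentiableAt).differentiableWithinAt
    · intro t ht
      rw [(hg1deriv t).deriv]
      exact hg1nonpos t (interior_subset ht)
  have hg10 : g1 0 = 0 := by
    show fderiv ℝ f (x 0) v = 0
    rw [hx0]; exact hD1
  have hg1le : ∀ t ∈ interior (Set.Icc (0:ℝ) 1), deriv g t ≤ 0 := by
    intro t ht
    rw [(hgderiv t).deriv]
    rw [interior_Icc] at ht
    exact le_trans (hg1anti (Set.left_mem_Icc.2 zero_le_one)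
      ⟨ht.1.le, ht.2.le⟩ ht.1.le) (le_of_eq hg10)
  have hganti : AntitoneOn g (Set.Icc (0:ℝ) 1) := by
    apply antitoneOn_of_deriv_nonpos (convex_Icc 0 1)
    · exact fun t _ => ((hgderiv t).continuousAt).continuousWithinAt
    · exact fun t _ => ((hgderiv t).differentiableAt).differentiableWithinAt
    · exact hg1le
  rw [← hx1, ← hx0]
  exact hganti (Set.left_mem_Icc.2 zero_le_one) (Set.right_mem_Icc.2 zero_le_one) zero_le_one
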